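/- In the setting of the previous semi-orthogonal decomposition lemma: if C₁ and C₂ are idempotent complete full stable subcategories of a stable category C with Hom_C(C₁, C₂) = 0, then the smallest full stable subcategory C° = ⟨C₁, C₂⟩ containing both is also idempotent complete. -/

import Mathlib

/-!
Statement 4: if `C₁, C₂` are idempotent complete full stable subcategories of a stable
category `C` with `Hom(C₁, C₂) = 0`, then the smallest full stable subcategory
`C° = ⟨C₁, C₂⟩` containing both is idempotent complete.
-/

open CategoryTheory Limits Pretriangulated

universe v u

variable {C : Type u} [Category.{v} C] [Preadditive C] [HasZeroObject C] [HasShift C ℤ]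
  [∀ n : ℤ, (CategoryTheory.shiftFunctor C n).Additive] [Pretriangulated C]

/-- A class of objects is a (full) stable subcategory if it is closed under isomorphisms,
zero objects, shifts, and cones of distinguished triangles. -/
structure IsStableSub (P : C → Prop) : Prop where
  iso_closed : ∀ ⦃X Y : C⦄, (X ≅ Y) → P X → P Y
  zero_mem : ∀ X : C, IsZero X → P X
  shift_closed : ∀ (X : C) (n : ℤ), P X → P (X⟦n⟧)
  cone_closed : ∀ T ∈ distTriang C, P (Triangle.obj₁ T) → P (Triangle.obj₂ T) →
    P (Triangle.obj₃ T)

/-- The smallest full stable subcategory of `C` containing `C₁` and `C₂`. -/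
def StableSpan (C₁ C₂ : C → Prop) : C → Prop := fun X =>
  ∀ P : C → Prop,
    (∀ Y, C₁ Y → P Y) → (∀ Y, C₂ Y → P Y) →
    (∀ ⦃Y Z : C⦄, (Y ≅ Z) → P Y → P Z) →
    (∀ Y : C, IsZero Y → P Y) →
    (∀ (Y : C) (n : ℤ), P Y → P (Y⟦n⟧)) →
    (∀ T ∈ distTriang C, P (Triangle.obj₁ T) → P (Triangle.obj₂ T) → P (Triangle.obj₃ T)) →
    P X

/-- A full subcategory `P` of `C` is idempotent complete if every idempotent endomorphism of
an object of `P` splits through an object of `P`. -/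
def IdemCompleteSub (P : C → Prop) : Prop :=
  ∀ ⦃X : C⦄, P X → ∀ e : X ⟶ X, e ≫ e = e →
    ∃ (Y : C) (_ : P Y) (r : X ⟶ Y) (s : Y ⟶ X), r ≫ s = e ∧ s ≫ r = 𝟙 Y


set_option linter.unusedSectionVars false

open Category

section Helpers

variable (C₂ : C → Prop) in
/-- left orthogonal to `C₂` -/
def LO (V : C) : Prop := ∀ ⦃Y : C⦄, C₂ Y → ∀ f : V ⟶ Y, f = 0

variable (C₁ : C → Prop) in
/-- right orthogonal to `C₁` -/
def RO (V : C) : Prop := ∀ ⦃Y : C⦄, C₁ Y → ∀ f : Y ⟶ V, f = 0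

variable {C₁ C₂ : C → Prop}

lemma orth₀ (horth : ∀ ⦃X Y : C⦄, C₁ X → C₂ Y → ∀ (n : ℤ) (f : X ⟶ Y⟦n⟧), f = 0)
    {A B : C} (hA : C₁ A) (hB : C₂ B) (f : A ⟶ B) : f = 0 := by
  have h := horth hA hB 0 (f ≫ (shiftFunctorZero C ℤ).inv.app B)
  have : f = (f ≫ (shiftFunctorZero C ℤ).inv.app B) ≫ (shiftFunctorZero C ℤ).hom.app B := by
    simp
  rw [this, h, zero_comp]

lemma LO_of_C₁ (horth : ∀ ⦃X Y : C⦄, C₁ X → C₂ Y → ∀ (n : ℤ) (f : X ⟶ Y⟦n⟧), f = 0)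
    {V : C} (hV : C₁ V) : LO C₂ V := fun _ hY f => orth₀ horth hV hY f

lemma RO_of_C₂ (horth : ∀ ⦃X Y : C⦄, C₁ X → C₂ Y → ∀ (n : ℤ) (f : X ⟶ Y⟦n⟧), f = 0)
    {V : C} (hV : C₂ V) : RO C₁ V := fun _ hY f => orth₀ horth hY hV f

lemma LO.shift (h₂shift : ∀ (X : C) (n : ℤ), C₂ X → C₂ (X⟦n⟧))
    {V : C} (hV : LO C₂ V) (n : ℤ) : LO C₂ (V⟦n⟧) := by
  intro Y hY f
  let adj := (shiftEquiv C n).toAdjunction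
  have h0 : (adj.homEquiv V Y) f = 0 := hV (h₂shift Y (-n) hY) _
  have : f = (adj.homEquiv V Y).symm ((adj.homEquiv V Y) f) := (Equiv.symm_apply_apply _ _).symm
  rw [this, h0, Adjunction.homEquiv_counit, Functor.map_zero, zero_comp]
  rfl

lemma RO.shift (h₁shift : ∀ (X : C) (n : ℤ), C₁ X → C₁ (X⟦n⟧))
    {V : C} (hV : RO C₁ V) (n : ℤ) : RO C₁ (V⟦n⟧) := by
  intro Y hY f
  let adj := (shiftEquiv' C (-n) n (neg_add_cancel n)).toAdjunction
  have h0 : (adj.homEquiv Y V).symm f = 0 := hV (h₁shift Y (-n) hY) _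
  have : f = (adj.homEquiv Y V) ((adj.homEquiv Y V).symm f) := (Equiv.apply_symm_apply _ _).symm
  rw [this, h0, Adjunction.homEquiv_unit, Functor.map_zero, comp_zero]
  rfl

/-- transfer bijectivity of post-composition along a shift -/
lemma postcomp_shift_bijective (h₂shift : ∀ (X : C) (n : ℤ), C₂ X → C₂ (X⟦n⟧))
    {P R : C} (u : P ⟶ R) (n : ℤ)
    (hb : ∀ V : C, LO C₂ V → Function.Bijective (fun g : V ⟶ P => g ≫ u))
    (V : C) (hV : LO C₂ V) :
    Function.Bijective (fun g : V ⟶ P⟦n⟧ => g ≫ u⟦n⟧') := by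
  let adj := (shiftEquiv' C (-n) n (neg_add_cancel n)).toAdjunction
  have key : (fun g : V ⟶ P⟦n⟧ => g ≫ u⟦n⟧')
      = (adj.homEquiv V R) ∘ (fun g : V⟦-n⟧ ⟶ P => g ≫ u) ∘ (adj.homEquiv V P).symm := by
    funext g
    have := adj.homEquiv_naturality_right ((adj.homEquiv V P).symm g) u
    erw [Function.comp_apply, Function.comp_apply, this, Equiv.apply_symm_apply]
    rfl
  rw [key]
  exact (adj.homEquiv V R).bijective.comp ((hb _ (LO.shift h₂shift hV (-n))).comp
    (adj.homEquiv V P).symm.bijective)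

/-- transfer bijectivity of pre-composition along a shift -/
lemma precomp_shift_bijective (h₁shift : ∀ (X : C) (n : ℤ), C₁ X → C₁ (X⟦n⟧))
    {P R : C} (u : P ⟶ R) (n : ℤ)
    (hb : ∀ V : C, RO C₁ V → Function.Bijective (fun g : R ⟶ V => u ≫ g))
    (V : C) (hV : RO C₁ V) :
    Function.Bijective (fun g : R⟦n⟧ ⟶ V => u⟦n⟧' ≫ g) := by
  let adj := (shiftEquiv' C n (-n) (add_neg_cancel n)).toAdjunction
  have key : (fun g : R⟦n⟧ ⟶ V => u⟦n⟧' ≫ g)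
      = (adj.homEquiv P V).symm ∘ (fun g : R ⟶ V⟦-n⟧ => u ≫ g) ∘ (adj.homEquiv R V) := by
    funext g
    have := adj.homEquiv_naturality_left u g
    erw [Function.comp_apply, Function.comp_apply, ← this, Equiv.symm_apply_apply]
    rfl
  rw [key]
  exact (adj.homEquiv P V).symm.bijective.comp ((hb _ (RO.shift h₁shift hV (-n))).comp
    (adj.homEquiv R V).bijective)

/-- In a distinguished triangle with third object in `C₂`, post-composition with `mor₁`
is bijective on maps from any `V` left-orthogonal to `C₂`. -/
lemma postcomp_bij_of_triangle (h₂shift : ∀ (X : C) (n : ℤ), C₂ X → C₂ (X⟦n⟧))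
    (T : Triangle C) (hT : T ∈ distTriang C) (h3 : C₂ T.obj₃)
    (V : C) (hV : LO C₂ V) :
    Function.Bijective (fun g : V ⟶ T.obj₁ => g ≫ T.mor₁) := by
  constructor
  · intro x y hxy
    dsimp at hxy
    have hker : (x - y) ≫ T.mor₁ = 0 := by rw [Preadditive.sub_comp, hxy, sub_self]
    obtain ⟨g, hg⟩ := Triangle.coyoneda_exact₂ _ (inv_rot_of_distTriang _ hT) (x - y) hker
    have : g = 0 := hV (h₂shift _ (-1) h3) g
    rw [this, zero_comp] at hg
    exact sub_eq_zero.1 hg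
  · intro z
    have hz : z ≫ T.mor₂ = 0 := hV h3 _
    obtain ⟨g, hg⟩ := Triangle.coyoneda_exact₂ _ hT z hz
    exact ⟨g, hg.symm⟩

/-- In a distinguished triangle with first object in `C₁`, pre-composition with `mor₂`
is bijective on maps into any `V` right-orthogonal to `C₁`. -/
lemma precomp_bij_of_triangle (h₁shift : ∀ (X : C) (n : ℤ), C₁ X → C₁ (X⟦n⟧))
    (T : Triangle C) (hT : T ∈ distTriang C) (h1 : C₁ T.obj₁)
    (V : C) (hV : RO C₁ V) :
    Function.Bijective (fun g : T.obj₃ ⟶ V => T.mor₂ ≫ g) := by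
  constructor
  · intro x y hxy
    dsimp at hxy
    have hker : T.mor₂ ≫ (x - y) = 0 := by rw [Preadditive.comp_sub, hxy, sub_self]
    obtain ⟨g, hg⟩ := Triangle.yoneda_exact₃ _ hT (x - y) hker
    have : g = 0 := hV (h₁shift _ 1 h1) g
    rw [this, comp_zero] at hg
    exact sub_eq_zero.1 hg
  · intro z
    have hz : T.mor₁ ≫ z = 0 := hV h1 _
    obtain ⟨g, hg⟩ := Triangle.yoneda_exact₂ _ hT z hz
    exact ⟨g, hg.symm⟩

end Helpers

section SOD

variable {C₁ C₂ : C → Prop}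

/-- `X` admits a semiorthogonal decomposition triangle `A ⟶ X ⟶ B` with `A ∈ C₁`, `B ∈ C₂`. -/
def HasSOD (C₁ C₂ : C → Prop) (X : C) : Prop :=
  ∃ (A B : C) (f : A ⟶ X) (g : X ⟶ B) (h : B ⟶ A⟦(1:ℤ)⟧),
    C₁ A ∧ C₂ B ∧ Triangle.mk f g h ∈ distTriang C

lemma hasSOD_cone (h₁ : IsStableSub C₁) (h₂ : IsStableSub C₂)
    (horth : ∀ ⦃X Y : C⦄, C₁ X → C₂ Y → ∀ (n : ℤ) (f : X ⟶ Y⟦n⟧), f = 0)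
    (T : Triangle C) (hT : T ∈ distTriang C)
    (hA : HasSOD C₁ C₂ T.obj₁) (hB : HasSOD C₁ C₂ T.obj₂) :
    HasSOD C₁ C₂ T.obj₃ := by
  obtain ⟨A₁, A₂, a, a', a'', hA₁, hA₂, hTA⟩ := hA
  obtain ⟨B₁, B₂, b, b', b'', hB₁, hB₂, hTB⟩ := hB
  have hT12 : T.mor₁ ≫ T.mor₂ = 0 := comp_distTriang_mor_zero₁₂ _ hT
  have hT23 : T.mor₂ ≫ T.mor₃ = 0 := comp_distTriang_mor_zero₂₃ _ hT
  have hT31 : T.mor₃ ≫ T.mor₁⟦(1:ℤ)⟧' = 0 := comp_distTriang_mor_zero₃₁ _ hT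
  -- the comparison map f₁ : A₁ ⟶ B₁
  obtain ⟨f₁, hf₁⟩ : ∃ f₁ : A₁ ⟶ B₁, a ≫ T.mor₁ = f₁ ≫ b :=
    Triangle.coyoneda_exact₂ _ hTB (a ≫ T.mor₁) (orth₀ horth hA₁ hB₂ _)
  -- the comparison map f₂ : A₂ ⟶ B₂ (TR3)
  obtain ⟨f₂, hf₂₁, hf₂₂⟩ : ∃ f₂ : A₂ ⟶ B₂,
      a' ≫ f₂ = T.mor₁ ≫ b' ∧ a'' ≫ f₁⟦(1:ℤ)⟧' = f₂ ≫ b'' :=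
    complete_distinguished_triangle_morphism
      (Triangle.mk a a' a'') (Triangle.mk b b' b'') hTA hTB f₁ T.mor₁ hf₁
  -- cones
  obtain ⟨Z₁, g₁, k₁, hR₁⟩ := distinguished_cocone_triangle f₁
  obtain ⟨Z₂, g₂, k₂, hR₂⟩ := distinguished_cocone_triangle f₂
  have hZ₁ : C₁ Z₁ := h₁.cone_closed _ hR₁ hA₁ hB₁
  have hZ₂ : C₂ Z₂ := h₂.cone_closed _ hR₂ hA₂ hB₂
  have hf₁g₁ : f₁ ≫ g₁ = 0 := comp_distTriang_mor_zero₁₂ _ hR₁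
  have hk₂f₂ : k₂ ≫ f₂⟦(1:ℤ)⟧' = 0 := comp_distTriang_mor_zero₃₁ _ hR₂
  -- comparison maps j : Z₁ ⟶ Z and w : Z ⟶ Z₂
  obtain ⟨j, hj₁, hj₂⟩ : ∃ j : Z₁ ⟶ T.obj₃,
      g₁ ≫ j = b ≫ T.mor₂ ∧ k₁ ≫ a⟦(1:ℤ)⟧' = j ≫ T.mor₃ :=
    complete_distinguished_triangle_morphism
      (Triangle.mk f₁ g₁ k₁) T hR₁ hT a b hf₁.symm
  obtain ⟨w, hw₁, hw₂⟩ : ∃ w : T.obj₃ ⟶ Z₂,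
      T.mor₂ ≫ w = b' ≫ g₂ ∧ T.mor₃ ≫ a'⟦(1:ℤ)⟧' = w ≫ k₂ :=
    complete_distinguished_triangle_morphism
      T (Triangle.mk f₂ g₂ k₂) hT hR₂ a' b' hf₂₁.symm
  -- bijectivity of post/pre-composition for the four corner maps
  have apostAll : ∀ V : C, LO C₂ V → Function.Bijective (fun g : V ⟶ A₁ => g ≫ a) :=
    fun V hV => postcomp_bij_of_triangle h₂.shift_closed _ hTA hA₂ V hV
  have bpostAll : ∀ V : C, LO C₂ V → Function.Bijective (fun g : V ⟶ B₁ => g ≫ b) :=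
    fun V hV => postcomp_bij_of_triangle h₂.shift_closed _ hTB hB₂ V hV
  have a'preAll : ∀ V : C, RO C₁ V → Function.Bijective (fun g : A₂ ⟶ V => a' ≫ g) :=
    fun V hV => precomp_bij_of_triangle h₁.shift_closed _ hTA hA₁ V hV
  have b'preAll : ∀ V : C, RO C₁ V → Function.Bijective (fun g : B₂ ⟶ V => b' ≫ g) :=
    fun V hV => precomp_bij_of_triangle h₁.shift_closed _ hTB hB₁ V hV
  -- `j` is a `C₁`-colocalization
  have jpostAll : ∀ V : C, LO C₂ V → Function.Bijective (fun g : V ⟶ Z₁ => g ≫ j) := by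
    intro V hV
    have hker : ∀ ζ : V ⟶ Z₁, ζ ≫ j = 0 → ζ = 0 := by
      intro ζ hζ
      have h1 : (ζ ≫ k₁) ≫ a⟦(1:ℤ)⟧' = 0 := by
        rw [assoc, hj₂, ← assoc, hζ, zero_comp]
      have h2 : ζ ≫ k₁ = 0 := by
        apply (postcomp_shift_bijective h₂.shift_closed a 1 apostAll V hV).injective
        dsimp only
        rw [h1, zero_comp]
      obtain ⟨η, hη⟩ : ∃ η : V ⟶ B₁, ζ = η ≫ g₁ := Triangle.coyoneda_exact₃ _ hR₁ ζ h2
      have h3 : (η ≫ b) ≫ T.mor₂ = 0 := by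
        rw [assoc, ← hj₁, ← assoc, ← hη, hζ]
      obtain ⟨ξ, hξ⟩ := Triangle.coyoneda_exact₂ _ hT (η ≫ b) h3
      obtain ⟨ξ₁, hξ₁⟩ := (apostAll V hV).surjective ξ
      dsimp only at hξ₁
      have h4 : (η - ξ₁ ≫ f₁) ≫ b = 0 := by
        rw [Preadditive.sub_comp, assoc, ← hf₁, ← assoc, hξ₁, ← hξ, sub_self]
      obtain ⟨τ, hτ⟩ := Triangle.coyoneda_exact₂ _ (inv_rot_of_distTriang _ hTB)
        (η - ξ₁ ≫ f₁) h4
      have hτ0 : τ = 0 := hV (h₂.shift_closed B₂ (-1) hB₂) τ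
      have h5 : η = ξ₁ ≫ f₁ := by
        rw [hτ0, zero_comp] at hτ; exact sub_eq_zero.1 hτ
      rw [hη, h5, assoc, hf₁g₁, comp_zero]
    constructor
    · intro x y hxy
      exact sub_eq_zero.1 (hker (x - y)
        (by dsimp only at hxy; rw [Preadditive.sub_comp, hxy, sub_self]))
    · intro z
      obtain ⟨α₁, hα₁⟩ :=
        (postcomp_shift_bijective h₂.shift_closed a 1 apostAll V hV).surjective (z ≫ T.mor₃)
      dsimp only at hα₁
      have hstep : (α₁ ≫ f₁⟦(1:ℤ)⟧') ≫ b⟦(1:ℤ)⟧' = 0 := by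
        rw [assoc, ← Functor.map_comp, ← hf₁, Functor.map_comp, ← assoc, hα₁, assoc,
          hT31, comp_zero]
      have h6 : α₁ ≫ f₁⟦(1:ℤ)⟧' = 0 := by
        apply (postcomp_shift_bijective h₂.shift_closed b 1 bpostAll V hV).injective
        dsimp only
        rw [hstep, zero_comp]
      obtain ⟨ζ₁, hζ₁⟩ : ∃ ζ₁ : V ⟶ Z₁, α₁ = ζ₁ ≫ k₁ :=
        Triangle.coyoneda_exact₁ _ hR₁ α₁ h6
      have h7 : (z - ζ₁ ≫ j) ≫ T.mor₃ = 0 := by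
        rw [Preadditive.sub_comp, assoc, ← hj₂, ← assoc, ← hζ₁, hα₁, sub_self]
      obtain ⟨y, hy⟩ := Triangle.coyoneda_exact₃ _ hT (z - ζ₁ ≫ j) h7
      obtain ⟨y₁, hy₁⟩ := (bpostAll V hV).surjective y
      dsimp only at hy₁
      refine ⟨ζ₁ + y₁ ≫ g₁, ?_⟩
      dsimp only
      rw [Preadditive.add_comp, assoc, hj₁, ← assoc, hy₁, ← hy, add_sub_cancel]
  -- `w` is a `C₂`-localization
  have wpreAll : ∀ V : C, RO C₁ V → Function.Bijective (fun g : Z₂ ⟶ V => w ≫ g) := by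
    intro V hV
    have hker : ∀ ρ : Z₂ ⟶ V, w ≫ ρ = 0 → ρ = 0 := by
      intro ρ hρ
      have h1 : b' ≫ (g₂ ≫ ρ) = 0 := by
        rw [← assoc, ← hw₁, assoc, hρ, comp_zero]
      have h2 : g₂ ≫ ρ = 0 := by
        apply (b'preAll V hV).injective
        dsimp only
        rw [h1, comp_zero]
      obtain ⟨ρ', hρ'⟩ : ∃ ρ' : A₂⟦(1:ℤ)⟧ ⟶ V, ρ = k₂ ≫ ρ' :=
        Triangle.yoneda_exact₃ _ hR₂ ρ h2
      have h3 : T.mor₃ ≫ (a'⟦(1:ℤ)⟧' ≫ ρ') = 0 := by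
        rw [← assoc, hw₂, assoc, ← hρ', hρ]
      obtain ⟨sh, hsh⟩ : ∃ sh : T.obj₂⟦(1:ℤ)⟧ ⟶ V,
          a'⟦(1:ℤ)⟧' ≫ ρ' = (-T.mor₁⟦(1:ℤ)⟧') ≫ sh :=
        Triangle.yoneda_exact₃ _ (rot_of_distTriang _ hT) (a'⟦(1:ℤ)⟧' ≫ ρ') h3
      obtain ⟨s₂', hs₂'⟩ :=
        (precomp_shift_bijective h₁.shift_closed b' 1 b'preAll V hV).surjective (-sh)
      dsimp only at hs₂'
      have h4 : a'⟦(1:ℤ)⟧' ≫ ρ' = a'⟦(1:ℤ)⟧' ≫ (f₂⟦(1:ℤ)⟧' ≫ s₂') := by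
        rw [hsh, Preadditive.neg_comp, ← Preadditive.comp_neg, ← hs₂', ← assoc, ← Functor.map_comp, ← hf₂₁,
          Functor.map_comp, assoc]
      have h5 : ρ' = f₂⟦(1:ℤ)⟧' ≫ s₂' :=
        (precomp_shift_bijective h₁.shift_closed a' 1 a'preAll V hV).injective h4
      rw [hρ', h5, ← assoc, hk₂f₂, zero_comp]
    constructor
    · intro x y hxy
      exact sub_eq_zero.1 (hker (x - y)
        (by dsimp only at hxy; rw [Preadditive.comp_sub, hxy, sub_self]))
    · intro z
      obtain ⟨β₂, hβ₂⟩ := (b'preAll V hV).surjective (T.mor₂ ≫ z)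
      dsimp only at hβ₂
      have h1 : a' ≫ (f₂ ≫ β₂) = 0 := by
        rw [← assoc, hf₂₁, assoc, hβ₂, ← assoc, hT12, zero_comp]
      have h2 : f₂ ≫ β₂ = 0 := by
        apply (a'preAll V hV).injective
        dsimp only
        rw [h1, comp_zero]
      obtain ⟨ρ₁, hρ₁⟩ : ∃ ρ₁ : Z₂ ⟶ V, β₂ = g₂ ≫ ρ₁ :=
        Triangle.yoneda_exact₂ _ hR₂ β₂ h2
      have h3 : T.mor₂ ≫ (z - w ≫ ρ₁) = 0 := by
        rw [Preadditive.comp_sub, ← assoc, hw₁, assoc, ← hρ₁, hβ₂, sub_self]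
      obtain ⟨yh, hyh⟩ := Triangle.yoneda_exact₃ _ hT (z - w ≫ ρ₁) h3
      obtain ⟨y₂, hy₂⟩ :=
        (precomp_shift_bijective h₁.shift_closed a' 1 a'preAll V hV).surjective yh
      dsimp only at hy₂
      refine ⟨ρ₁ + k₂ ≫ y₂, ?_⟩
      dsimp only
      rw [Preadditive.comp_add, ← assoc, ← hw₂, assoc, hy₂, ← hyh, add_sub_cancel]
  -- the cone of `j` and the fibre of `w`
  obtain ⟨Q, k, l, hTQ⟩ := distinguished_cocone_triangle j
  obtain ⟨W, i, st, hTW⟩ := distinguished_cocone_triangle₁ w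
  have hjk : j ≫ k = 0 := comp_distTriang_mor_zero₁₂ _ hTQ
  have hlj : l ≫ j⟦(1:ℤ)⟧' = 0 := comp_distTriang_mor_zero₃₁ _ hTQ
  have hiw : i ≫ w = 0 := comp_distTriang_mor_zero₁₂ _ hTW
  have hws : w ≫ st = 0 := comp_distTriang_mor_zero₂₃ _ hTW
  -- W is left-orthogonal (after one shift)
  have hWsh : ∀ V : C, RO C₁ V → ∀ t : W⟦(1:ℤ)⟧ ⟶ V, t = 0 := by
    intro V hV t
    have h1 : st ≫ t = 0 := by
      apply (wpreAll V hV).injective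
      dsimp only
      rw [← assoc, hws, zero_comp, comp_zero]
    obtain ⟨t₀, ht₀⟩ : ∃ t₀ : T.obj₃⟦(1:ℤ)⟧ ⟶ V, t = (-i⟦(1:ℤ)⟧') ≫ t₀ :=
      Triangle.yoneda_exact₃ _ (rot_of_distTriang _ hTW) t h1
    obtain ⟨ρ, hρ⟩ :=
      (precomp_shift_bijective h₁.shift_closed w 1 wpreAll V hV).surjective t₀
    dsimp only at hρ
    rw [ht₀, ← hρ, Preadditive.neg_comp, ← assoc, ← Functor.map_comp, hiw,
      Functor.map_zero, zero_comp, neg_zero]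
  have hWLO : LO C₂ W := by
    intro Y hY f
    have h := hWsh (Y⟦(1:ℤ)⟧) (RO_of_C₂ horth (h₂.shift_closed Y 1 hY)) (f⟦(1:ℤ)⟧')
    apply (shiftFunctor C (1:ℤ)).map_injective
    rw [h, Functor.map_zero]
  -- Q is right-orthogonal
  have hQRO : ∀ ⦃Y : C⦄, C₁ Y → ∀ y : Y ⟶ Q, y = 0 := by
    intro Y hY y
    have hyl : y ≫ l = 0 := by
      apply (postcomp_shift_bijective h₂.shift_closed j 1 jpostAll Y
        (LO_of_C₁ horth hY)).injective
      dsimp only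
      rw [assoc, hlj, comp_zero, zero_comp]
    obtain ⟨yh, hyh⟩ : ∃ yh : Y ⟶ T.obj₃, y = yh ≫ k :=
      Triangle.coyoneda_exact₃ _ hTQ y hyl
    obtain ⟨yh₁, hyh₁⟩ := (jpostAll Y (LO_of_C₁ horth hY)).surjective yh
    dsimp only at hyh₁
    rw [hyh, ← hyh₁, assoc, hjk, comp_zero]
  -- i ≫ k = 0, hence k factors through w
  obtain ⟨x, hx⟩ := (jpostAll W hWLO).surjective i
  dsimp only at hx
  have hik : i ≫ k = 0 := by
    rw [← hx, assoc, hjk, comp_zero]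
  obtain ⟨θ', hθ'⟩ : ∃ θ' : Z₂ ⟶ Q, k = w ≫ θ' := Triangle.yoneda_exact₂ _ hTW k hik
  -- w factors through k
  have hjw : j ≫ w = 0 := orth₀ horth hZ₁ hZ₂ _
  obtain ⟨θ, hθ⟩ : ∃ θ : Q ⟶ Z₂, w = k ≫ θ := Triangle.yoneda_exact₂ _ hTQ w hjw
  -- θ and θ' are mutually inverse
  have h8 : k ≫ (θ ≫ θ' - 𝟙 Q) = 0 := by
    rw [Preadditive.comp_sub, ← assoc, ← hθ, ← hθ', comp_id, sub_self]
  obtain ⟨ν, hν⟩ : ∃ ν : Z₁⟦(1:ℤ)⟧ ⟶ Q, θ ≫ θ' - 𝟙 Q = l ≫ ν :=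
    Triangle.yoneda_exact₃ _ hTQ (θ ≫ θ' - 𝟙 Q) h8
  have hν0 : ν = 0 := hQRO (h₁.shift_closed Z₁ 1 hZ₁) ν
  have hθθ' : θ ≫ θ' = 𝟙 Q := by
    rw [hν0, comp_zero] at hν; exact sub_eq_zero.1 hν
  have h9 : w ≫ (θ' ≫ θ - 𝟙 Z₂) = 0 := by
    rw [Preadditive.comp_sub, ← assoc, ← hθ', ← hθ, comp_id, sub_self]
  obtain ⟨μ, hμ⟩ : ∃ μ : W⟦(1:ℤ)⟧ ⟶ Z₂, θ' ≫ θ - 𝟙 Z₂ = st ≫ μ :=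
    Triangle.yoneda_exact₃ _ hTW (θ' ≫ θ - 𝟙 Z₂) h9
  have hμ0 : μ = 0 := hWsh Z₂ (RO_of_C₂ horth hZ₂) μ
  have hθ'θ : θ' ≫ θ = 𝟙 Z₂ := by
    rw [hμ0, comp_zero] at hμ; exact sub_eq_zero.1 hμ
  have hQ : C₂ Q := h₂.iso_closed (Iso.mk θ' θ hθ'θ hθθ') hZ₂
  exact ⟨Z₁, Q, j, k, l, hZ₁, hQ, hTQ⟩

end SOD

section SpanLemmas

open ZeroObject

variable {C₁ C₂ : C → Prop}

lemma hasSOD_of_iso (hX : HasSOD C₁ C₂ X') (e : X' ≅ X'') : HasSOD C₁ C₂ X'' := by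
  obtain ⟨A, B, f, g, h, hA, hB, hT⟩ := hX
  refine ⟨A, B, f ≫ e.hom, e.inv ≫ g, h, hA, hB, ?_⟩
  refine isomorphic_distinguished _ hT _ ?_
  exact Triangle.isoMk _ _ (Iso.refl _) e.symm (Iso.refl _)
    (by dsimp; erw [id_comp, assoc, e.hom_inv_id, comp_id]; rfl) (by dsimp; erw [comp_id]; rfl)
    (by show h ≫ (shiftFunctor C 1).map (𝟙 A) = 𝟙 B ≫ h; simp)

lemma hasSOD_of_C₁ (h₂ : IsStableSub C₂) {X : C} (hX : C₁ X) : HasSOD C₁ C₂ X :=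
  ⟨X, 0, 𝟙 X, 0, 0, hX, h₂.zero_mem 0 (isZero_zero C), contractible_distinguished X⟩

lemma hasSOD_of_C₂ (h₁ : IsStableSub C₁) {X : C} (hX : C₂ X) : HasSOD C₁ C₂ X :=
  ⟨0, X, 0, 𝟙 X, 0, h₁.zero_mem 0 (isZero_zero C), hX, contractible_distinguished₁ X⟩

lemma hasSOD_of_isZero (h₁ : IsStableSub C₁) (h₂ : IsStableSub C₂) {X : C} (hX : IsZero X) :
    HasSOD C₁ C₂ X :=
  ⟨X, 0, 𝟙 X, 0, 0, h₁.zero_mem X hX, h₂.zero_mem 0 (isZero_zero C),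
    contractible_distinguished X⟩

lemma hasSOD_shift (h₁ : IsStableSub C₁) (h₂ : IsStableSub C₂) {X : C}
    (hX : HasSOD C₁ C₂ X) (n : ℤ) : HasSOD C₁ C₂ (X⟦n⟧) := by
  obtain ⟨A, B, f, g, h, hA, hB, hT⟩ := hX
  have hT' : Triangle.mk (n.negOnePow • f⟦n⟧') (n.negOnePow • g⟦n⟧')
      (n.negOnePow • h⟦n⟧' ≫ (shiftFunctorComm C 1 n).hom.app A) ∈ distTriang C :=
    Triangle.shift_distinguished _ hT n
  exact ⟨A⟦n⟧, B⟦n⟧, _, _, _, h₁.shift_closed A n hA, h₂.shift_closed B n hB, hT'⟩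

lemma span_hasSOD (h₁ : IsStableSub C₁) (h₂ : IsStableSub C₂)
    (horth : ∀ ⦃X Y : C⦄, C₁ X → C₂ Y → ∀ (n : ℤ) (f : X ⟶ Y⟦n⟧), f = 0)
    {X : C} (hX : StableSpan C₁ C₂ X) : HasSOD C₁ C₂ X :=
  hX (HasSOD C₁ C₂)
    (fun _ hY => hasSOD_of_C₁ h₂ hY)
    (fun _ hY => hasSOD_of_C₂ h₁ hY)
    (fun _ _ e hY => hasSOD_of_iso hY e)
    (fun _ hY => hasSOD_of_isZero h₁ h₂ hY)
    (fun _ n hY => hasSOD_shift h₁ h₂ hY n)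
    (fun T hT hT₁ hT₂ => hasSOD_cone h₁ h₂ horth T hT hT₁ hT₂)

lemma span_of_C₁ {X : C} (hX : C₁ X) : StableSpan C₁ C₂ X :=
  fun _ p1 _ _ _ _ _ => p1 X hX

lemma span_of_C₂ {X : C} (hX : C₂ X) : StableSpan C₁ C₂ X :=
  fun _ _ p2 _ _ _ _ => p2 X hX

lemma span_shift {X : C} (hX : StableSpan C₁ C₂ X) (n : ℤ) : StableSpan C₁ C₂ (X⟦n⟧) :=
  fun P p1 p2 p3 p4 p5 p6 => p5 X n (hX P p1 p2 p3 p4 p5 p6)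

lemma span_cone₂ {T : Triangle C} (hT : T ∈ distTriang C)
    (h1 : StableSpan C₁ C₂ T.obj₁) (h3 : StableSpan C₁ C₂ T.obj₃) :
    StableSpan C₁ C₂ T.obj₂ := by
  intro P p1 p2 p3 p4 p5 p6
  exact p6 _ (inv_rot_of_distTriang _ hT)
    (p5 _ (-1) (h3 P p1 p2 p3 p4 p5 p6)) (h1 P p1 p2 p3 p4 p5 p6)

end SpanLemmas

section Splitting

variable {C₁ C₂ : C → Prop}

lemma split_of_hasSOD (h₁ : IsStableSub C₁) (h₂ : IsStableSub C₂)
    (horth : ∀ ⦃X Y : C⦄, C₁ X → C₂ Y → ∀ (n : ℤ) (f : X ⟶ Y⟦n⟧), f = 0)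
    (hic₁ : IdemCompleteSub C₁) (hic₂ : IdemCompleteSub C₂)
    {X : C} (hX : HasSOD C₁ C₂ X) (e : X ⟶ X) (he : e ≫ e = e) :
    ∃ (Y : C) (_ : StableSpan C₁ C₂ Y) (r : X ⟶ Y) (s : Y ⟶ X),
      r ≫ s = e ∧ s ≫ r = 𝟙 Y := by
  obtain ⟨X₁, X₂, f, g, h, hX₁, hX₂, hTX⟩ := hX
  -- induced idempotents
  obtain ⟨e₁, he₁⟩ : ∃ e₁ : X₁ ⟶ X₁, f ≫ e = e₁ ≫ f :=
    Triangle.coyoneda_exact₂ _ hTX (f ≫ e) (orth₀ horth hX₁ hX₂ _)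
  obtain ⟨e₂, he₂g, he₂h⟩ : ∃ e₂ : X₂ ⟶ X₂, g ≫ e₂ = e ≫ g ∧ h ≫ e₁⟦(1:ℤ)⟧' = e₂ ≫ h :=
    complete_distinguished_triangle_morphism (Triangle.mk f g h) (Triangle.mk f g h)
      hTX hTX e₁ e he₁
  have he₁idem : e₁ ≫ e₁ = e₁ := by
    have h0 : (e₁ ≫ e₁ - e₁) ≫ f = 0 := by
      rw [Preadditive.sub_comp, assoc, ← he₁, ← assoc, ← he₁, assoc, he, sub_self]
    obtain ⟨τ, hτ⟩ := Triangle.coyoneda_exact₂ _ (inv_rot_of_distTriang _ hTX)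
      (e₁ ≫ e₁ - e₁) h0
    have hτ0 : τ = 0 := orth₀ horth hX₁ (h₂.shift_closed X₂ (-1) hX₂) τ
    rw [hτ0, zero_comp] at hτ
    exact sub_eq_zero.1 hτ
  have he₂idem : e₂ ≫ e₂ = e₂ := by
    have h0 : g ≫ (e₂ ≫ e₂ - e₂) = 0 := by
      rw [Preadditive.comp_sub, ← assoc, he₂g, assoc, he₂g, ← assoc, he, sub_self]
    obtain ⟨ρ, hρ⟩ : ∃ ρ : X₁⟦(1:ℤ)⟧ ⟶ X₂, e₂ ≫ e₂ - e₂ = h ≫ ρ :=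
      Triangle.yoneda_exact₃ _ hTX _ h0
    have hρ0 : ρ = 0 := orth₀ horth (h₁.shift_closed X₁ 1 hX₁) hX₂ ρ
    rw [hρ0, comp_zero] at hρ
    exact sub_eq_zero.1 hρ
  -- split the pieces
  obtain ⟨Y₁, hY₁, r₁, s₁, hrs₁, hsr₁⟩ := hic₁ hX₁ e₁ he₁idem
  obtain ⟨Y₂, hY₂, r₂, s₂, hrs₂, hsr₂⟩ := hic₂ hX₂ e₂ he₂idem
  have her₁ : e₁ ≫ r₁ = r₁ := by rw [← hrs₁, assoc, hsr₁, comp_id]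
  have hse₂ : s₂ ≫ e₂ = s₂ := by rw [← hrs₂, ← assoc, hsr₂, id_comp]
  -- the candidate splitting object
  obtain ⟨Y, v, u, hTY⟩ := distinguished_cocone_triangle₂ (s₂ ≫ h ≫ r₁⟦(1:ℤ)⟧')
  have hYspan : StableSpan C₁ C₂ Y :=
    span_cone₂ hTY (span_of_C₁ hY₁) (span_of_C₂ hY₂)
  have hvu : v ≫ u = 0 := comp_distTriang_mor_zero₁₂ _ hTY
  -- comparison maps
  obtain ⟨s, hsv, hsu⟩ : ∃ s : Y ⟶ X, v ≫ s = s₁ ≫ f ∧ u ≫ s₂ = s ≫ g := by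
    refine complete_distinguished_triangle_morphism₂ (Triangle.mk v u _) (Triangle.mk f g h)
      hTY hTX s₁ s₂ ?_
    show (s₂ ≫ h ≫ r₁⟦(1:ℤ)⟧') ≫ s₁⟦(1:ℤ)⟧' = s₂ ≫ h
    rw [assoc, assoc, ← Functor.map_comp, hrs₁, he₂h, ← assoc, hse₂]
  obtain ⟨r, hrf, hru⟩ : ∃ r : X ⟶ Y, f ≫ r = r₁ ≫ v ∧ g ≫ r₂ = r ≫ u := by
    refine complete_distinguished_triangle_morphism₂ (Triangle.mk f g h) (Triangle.mk v u _)
      hTX hTY r₁ r₂ ?_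
    show h ≫ r₁⟦(1:ℤ)⟧' = r₂ ≫ (s₂ ≫ h ≫ r₁⟦(1:ℤ)⟧')
    rw [← assoc, hrs₂, ← assoc, ← he₂h, assoc, ← Functor.map_comp, her₁]
  -- the defect n of s ≫ r
  obtain ⟨n, hn⟩ : ∃ n : Y ⟶ Y, n = s ≫ r - 𝟙 Y := ⟨_, rfl⟩
  have hsr : s ≫ r = 𝟙 Y + n := by rw [hn]; abel
  have hvn : v ≫ n = 0 := by
    rw [hn, Preadditive.comp_sub, comp_id, ← assoc, hsv, assoc, hrf, ← assoc, hsr₁,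
      id_comp, sub_self]
  have hnu : n ≫ u = 0 := by
    rw [hn, Preadditive.sub_comp, id_comp, assoc, ← hru, ← assoc, ← hsu, assoc, hsr₂,
      comp_id, sub_self]
  obtain ⟨m, hm⟩ : ∃ m : Y ⟶ Y₁, n = m ≫ v := Triangle.coyoneda_exact₂ _ hTY n hnu
  obtain ⟨m', hm'⟩ : ∃ m' : Y₂ ⟶ Y, n = u ≫ m' := Triangle.yoneda_exact₂ _ hTY n hvn
  have hnn : n ≫ n = 0 := by
    calc n ≫ n = (m ≫ v) ≫ (u ≫ m') := by rw [← hm, ← hm']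
    _ = m ≫ (v ≫ u) ≫ m' := by simp only [assoc]
    _ = 0 := by rw [hvu, zero_comp, comp_zero]
  -- corrected section and idempotent p
  obtain ⟨s', hs'⟩ : ∃ s' : Y ⟶ X, s' = (𝟙 Y - n) ≫ s := ⟨_, rfl⟩
  have hs'r : s' ≫ r = 𝟙 Y := by
    rw [hs', assoc, hsr, Preadditive.sub_comp, id_comp, Preadditive.comp_add, comp_id,
      hnn, add_zero]
    abel
  obtain ⟨p, hp⟩ : ∃ p : X ⟶ X, p = r ≫ s' := ⟨_, rfl⟩
  have hps : p ≫ p = p := by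
    rw [hp]
    slice_lhs 2 3 => rw [hs'r]
    simp
  have hv1n : v ≫ (𝟙 Y - n) = v := by
    rw [Preadditive.comp_sub, comp_id, hvn, sub_zero]
  have h1nu : (𝟙 Y - n) ≫ u = u := by
    rw [Preadditive.sub_comp, id_comp, hnu, sub_zero]
  have hfp : f ≫ p = f ≫ e := by
    calc f ≫ p = (f ≫ r) ≫ s' := by rw [hp, assoc]
    _ = r₁ ≫ (v ≫ (𝟙 Y - n)) ≫ s := by rw [hrf, hs']; simp only [assoc]
    _ = r₁ ≫ v ≫ s := by rw [hv1n]
    _ = (r₁ ≫ s₁) ≫ f := by rw [hsv, ← assoc]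
    _ = f ≫ e := by rw [hrs₁, ← he₁]
  have hpg : p ≫ g = e ≫ g := by
    calc p ≫ g = r ≫ (𝟙 Y - n) ≫ (s ≫ g) := by rw [hp, hs']; simp only [assoc]
    _ = r ≫ (𝟙 Y - n) ≫ (u ≫ s₂) := by rw [← hsu]
    _ = r ≫ ((𝟙 Y - n) ≫ u) ≫ s₂ := by simp only [assoc]
    _ = (r ≫ u) ≫ s₂ := by rw [h1nu, ← assoc]
    _ = g ≫ (r₂ ≫ s₂) := by rw [← hru, assoc]
    _ = e ≫ g := by rw [hrs₂, he₂g]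
  -- the defect d of p
  obtain ⟨d, hd⟩ : ∃ d : X ⟶ X, d = p - e := ⟨_, rfl⟩
  have hped : p = e + d := by rw [hd]; abel
  have hfd : f ≫ d = 0 := by rw [hd, Preadditive.comp_sub, hfp, sub_self]
  have hdg : d ≫ g = 0 := by rw [hd, Preadditive.sub_comp, hpg, sub_self]
  obtain ⟨φ, hφ⟩ : ∃ φ : X ⟶ X₁, d = φ ≫ f := Triangle.coyoneda_exact₂ _ hTX d hdg
  have hdd : d ≫ d = 0 := by
    calc d ≫ d = (φ ≫ f) ≫ d := by rw [← hφ]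
    _ = φ ≫ (f ≫ d) := by rw [assoc]
    _ = 0 := by rw [hfd, comp_zero]
  -- the algebra of conjugation by 1 + c
  have hde : e ≫ d + d ≫ e = d := by
    have key := hps
    rw [hped] at key
    have expand : e ≫ e + (e ≫ d + (d ≫ e + d ≫ d)) = e + d := by
      calc e ≫ e + (e ≫ d + (d ≫ e + d ≫ d)) = (e + d) ≫ (e + d) := by
            simp only [Preadditive.add_comp, Preadditive.comp_add]; abel
      _ = e + d := key
    rw [he, hdd, add_zero] at expand
    exact add_left_cancel expand
  have hed' : e ≫ d = d - d ≫ e := eq_sub_of_add_eq hde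
  have hede : e ≫ (d ≫ e) = 0 := by
    rw [← assoc, hed', Preadditive.sub_comp, assoc, he, sub_self]
  have hded : (d ≫ e) ≫ d = 0 := by
    rw [assoc, hed', Preadditive.comp_sub, hdd]
    rw [← assoc, hdd, zero_comp, sub_self]
  obtain ⟨c, hc⟩ : ∃ c : X ⟶ X, c = d ≫ e - e ≫ d := ⟨_, rfl⟩
  have hce : c ≫ e = d ≫ e := by
    rw [hc, Preadditive.sub_comp, assoc, assoc, he, hede, sub_zero]
  have hec : e ≫ c = -(e ≫ d) := by
    rw [hc, Preadditive.comp_sub, hede, ← assoc, he, zero_sub]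
  have hcd : c ≫ d = 0 := by
    rw [hc, Preadditive.sub_comp, hded, assoc, hdd, comp_zero, sub_self]
  have hcec : (c ≫ e) ≫ d = 0 := by rw [hce, hded]
  have hcc : c ≫ c = 0 := by
    nth_rewrite 2 [hc]
    rw [Preadditive.comp_sub, ← assoc, ← assoc, hcd, zero_comp, hcec, sub_self]
  have hdec : (d ≫ e) ≫ c = 0 := by
    rw [assoc, hec, Preadditive.comp_neg, ← assoc, hded, neg_zero]
  have hconj : (𝟙 X + c) ≫ e ≫ (𝟙 X - c) = p := by
    have h1 : (𝟙 X + c) ≫ e = e + d ≫ e := by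
      rw [Preadditive.add_comp, id_comp, hce]
    rw [← assoc, h1, Preadditive.add_comp, Preadditive.comp_sub, Preadditive.comp_sub,
      comp_id, comp_id, hec, sub_neg_eq_add, hdec, sub_zero, hped]
    conv_rhs => rw [← hde]
    abel
  have hinv1 : (𝟙 X - c) ≫ (𝟙 X + c) = 𝟙 X := by
    rw [Preadditive.sub_comp, id_comp, Preadditive.comp_add, comp_id, hcc, add_zero]
    abel
  have hinv2 : (𝟙 X + c) ≫ (𝟙 X - c) = 𝟙 X := by
    rw [Preadditive.add_comp, id_comp, Preadditive.comp_sub, comp_id, hcc, sub_zero]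
    abel
  refine ⟨Y, hYspan, (𝟙 X - c) ≫ r, s' ≫ (𝟙 X + c), ?_, ?_⟩
  · have hmid : (𝟙 X - c) ≫ p ≫ (𝟙 X + c) = e := by
      rw [← hconj]
      simp only [assoc]
      rw [hinv1, comp_id, ← assoc, hinv1, id_comp]
    calc ((𝟙 X - c) ≫ r) ≫ (s' ≫ (𝟙 X + c)) = (𝟙 X - c) ≫ p ≫ (𝟙 X + c) := by
          rw [hp]; simp only [assoc]
    _ = e := hmid
  · calc (s' ≫ (𝟙 X + c)) ≫ ((𝟙 X - c) ≫ r) = s' ≫ ((𝟙 X + c) ≫ (𝟙 X - c)) ≫ r := by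
          simp only [assoc]
    _ = s' ≫ r := by rw [hinv2, id_comp]
    _ = 𝟙 Y := hs'r

end Splitting

/-- If `C₁` and `C₂` are idempotent complete full stable subcategories of
a stable category `C` with `Hom(C₁, C₂) = 0` (in every shift), then the smallest full
stable subcategory `C° = ⟨C₁, C₂⟩` containing both is also idempotent complete. -/
theorem stableSpan_idempotent_complete
    (C₁ C₂ : C → Prop) (h₁ : IsStableSub C₁) (h₂ : IsStableSub C₂)
    (horth : ∀ ⦃X Y : C⦄, C₁ X → C₂ Y → ∀ (n : ℤ) (f : X ⟶ Y⟦n⟧), f = 0)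
    (hic₁ : IdemCompleteSub C₁) (hic₂ : IdemCompleteSub C₂) :
    IdemCompleteSub (StableSpan C₁ C₂) := by
  intro X hX e he
  exact split_of_hasSOD h₁ h₂ horth hic₁ hic₂ (span_hasSOD h₁ h₂ horth hX) e he
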